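/- arXiv:1509.08228 — 3 statements merged into one kernel-verified Lean document; each statement's English description precedes it below -/
import Mathlib

section
/- Let u ∈ C¹([0,1]) with u'(y) ≥ c₀ > 0, let c = u(y_c) for some y_c ∈ [0,1], and define for continuous f the operator (Tf)(y) = ∫_{y_c}^{y} (u(y')−c)^{-2} ∫_{y_c}^{y'} f(z)(u(z)−c)² dz dy'. Then |(T1)(y)| ≤ (y − y_c)²/2 and by iteration |(T^k 1)(y)| ≤ (y − y_c)^{2k}/(2k)! for all k ≥ 1. -/
open MeasureTheory

/-- The operator `T f (y) = ∫_{y_c}^{y} (u(y')−c)^{-2} ∫_{y_c}^{y'} f(z)(u(z)−c)² dz dy'`. -/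
noncomputable def rayT (u : ℝ → ℝ) (c y_c : ℝ) (f : ℝ → ℝ) : ℝ → ℝ :=
  fun y => ∫ y' in y_c..y, ((u y' - c) ^ 2)⁻¹ * ∫ z in y_c..y', f z * (u z - c) ^ 2

lemma abs_integral_pow_abs_sub (a b : ℝ) (n : ℕ) :
    |∫ x in a..b, |x - a| ^ n| = |b - a| ^ (n + 1) / (n + 1) := by
  rcases le_total a b with h | h
  · rw [intervalIntegral.integral_of_le h, ← Set.uIoc_of_le h,
      integral_pow_abs_sub_uIoc, abs_of_nonneg (by positivity)]
  · rw [intervalIntegral.integral_of_ge h, abs_neg, ← Set.uIoc_of_ge h,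
      integral_pow_abs_sub_uIoc, abs_of_nonneg (by positivity)]

lemma sq_mono_aux (u : ℝ → ℝ) (hmono : MonotoneOn u (Set.Icc (0:ℝ) 1))
    (y_c : ℝ) (hyc : y_c ∈ Set.Icc (0:ℝ) 1) (y' : ℝ) (hy' : y' ∈ Set.Icc (0:ℝ) 1)
    (z : ℝ) (hz : z ∈ Set.uIcc y_c y') :
    (u z - u y_c) ^ 2 ≤ (u y' - u y_c) ^ 2 := by
  have hzI : z ∈ Set.Icc (0:ℝ) 1 := Set.uIcc_subset_Icc hyc hy' hz
  rcases le_total y_c y' with h | h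
  · rw [Set.uIcc_of_le h] at hz
    have h1 : u y_c ≤ u z := hmono hyc hzI hz.1
    have h2 : u z ≤ u y' := hmono hzI hy' hz.2
    exact sq_le_sq' (by linarith) (by linarith)
  · rw [Set.uIcc_of_ge h] at hz
    have h1 : u y' ≤ u z := hmono hy' hzI hz.1
    have h2 : u z ≤ u y_c := hmono hzI hyc hz.2
    have : (u z - u y_c) ^ 2 ≤ (u y_c - u y') ^ 2 :=
      sq_le_sq' (by linarith) (by linarith)
    calc (u z - u y_c) ^ 2 ≤ (u y_c - u y') ^ 2 := this
      _ = (u y' - u y_c) ^ 2 := by ring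

lemma rayT_bound (u : ℝ → ℝ) (y_c : ℝ) (hyc : y_c ∈ Set.Icc (0:ℝ) 1)
    (hmono : MonotoneOn u (Set.Icc (0:ℝ) 1)) (c : ℝ) (hc : c = u y_c)
    (f : ℝ → ℝ) (m : ℕ) (M : ℝ) (hM : 0 < M)
    (hf : ∀ z ∈ Set.Icc (0:ℝ) 1, |f z| ≤ |z - y_c| ^ m / M)
    (y : ℝ) (hy : y ∈ Set.Icc (0:ℝ) 1) :
    |rayT u c y_c f y| ≤ |y - y_c| ^ (m + 2) / (M * (m + 1) * (m + 2)) := by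
  have hsubY : Set.uIcc y_c y ⊆ Set.Icc (0:ℝ) 1 := Set.uIcc_subset_Icc hyc hy
  -- pointwise bound on outer integrand
  have key : ∀ y' ∈ Set.uIoc y_c y,
      ‖((u y' - c) ^ 2)⁻¹ * ∫ z in y_c..y', f z * (u z - c) ^ 2‖ ≤
        |y' - y_c| ^ (m + 1) / (M * (m + 1)) := by
    intro y' hy'
    have hy'I : y' ∈ Set.Icc (0:ℝ) 1 := hsubY (Set.uIoc_subset_uIcc hy')
    -- inner integral bound
    have hinner : ‖∫ z in y_c..y', f z * (u z - c) ^ 2‖ ≤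
        (u y' - c) ^ 2 / M * (|y' - y_c| ^ (m + 1) / (m + 1)) := by
      have hb : IntervalIntegrable (fun z => |z - y_c| ^ m / M * (u y' - c) ^ 2)
          volume y_c y' := by
        apply Continuous.intervalIntegrable
        continuity
      have hptwise : ∀ᵐ z ∂(volume.restrict (Set.uIoc y_c y')),
          ‖f z * (u z - c) ^ 2‖ ≤ |z - y_c| ^ m / M * (u y' - c) ^ 2 := by
        refine (ae_restrict_iff' measurableSet_uIoc).2
          (Filter.Eventually.of_forall fun z hz => ?_)
        have hzuIcc : z ∈ Set.uIcc y_c y' := Set.uIoc_subset_uIcc hz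
        have hzI : z ∈ Set.Icc (0:ℝ) 1 := Set.uIcc_subset_Icc hyc hy'I hzuIcc
        have hsq : (u z - c) ^ 2 ≤ (u y' - c) ^ 2 := by
          rw [hc]; exact sq_mono_aux u hmono y_c hyc y' hy'I z hzuIcc
        have hfz := hf z hzI
        calc ‖f z * (u z - c) ^ 2‖ = |f z| * (u z - c) ^ 2 := by
              rw [Real.norm_eq_abs, abs_mul, abs_of_nonneg (sq_nonneg (u z - c))]
          _ ≤ |z - y_c| ^ m / M * (u y' - c) ^ 2 := by
              apply mul_le_mul hfz hsq (sq_nonneg _)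
              positivity
      calc ‖∫ z in y_c..y', f z * (u z - c) ^ 2‖
          ≤ |∫ z in y_c..y', |z - y_c| ^ m / M * (u y' - c) ^ 2| :=
            intervalIntegral.norm_integral_le_abs_of_norm_le hptwise hb
        _ = (u y' - c) ^ 2 / M * |∫ z in y_c..y', |z - y_c| ^ m| := by
            rw [← abs_of_nonneg (show (0:ℝ) ≤ (u y' - c) ^ 2 / M by positivity),
              ← abs_mul]
            congr 1
            rw [← intervalIntegral.integral_const_mul]
            apply intervalIntegral.integral_congr
            intro z _; ring
        _ = (u y' - c) ^ 2 / M * (|y' - y_c| ^ (m + 1) / (m + 1)) := by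
            rw [abs_integral_pow_abs_sub]
    have hsqinv : ((u y' - c) ^ 2)⁻¹ * ((u y' - c) ^ 2 / M) ≤ 1 / M := by
      rcases eq_or_ne (u y' - c) 0 with h0 | h0
      · simp [h0]; positivity
      · rw [inv_mul_eq_div, div_div, div_le_div_iff₀ (by positivity) hM]
        rw [mul_comm ((u y' - c) ^ 2) M]
        rw [one_mul]
    calc ‖((u y' - c) ^ 2)⁻¹ * ∫ z in y_c..y', f z * (u z - c) ^ 2‖
        = ((u y' - c) ^ 2)⁻¹ * ‖∫ z in y_c..y', f z * (u z - c) ^ 2‖ := by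
          rw [norm_mul, Real.norm_eq_abs, abs_of_nonneg (by positivity)]
      _ ≤ ((u y' - c) ^ 2)⁻¹ * ((u y' - c) ^ 2 / M * (|y' - y_c| ^ (m + 1) / (m + 1))) := by
          apply mul_le_mul_of_nonneg_left hinner (by positivity)
      _ = ((u y' - c) ^ 2)⁻¹ * ((u y' - c) ^ 2 / M) * (|y' - y_c| ^ (m + 1) / (m + 1)) := by
          ring
      _ ≤ 1 / M * (|y' - y_c| ^ (m + 1) / (m + 1)) := by
          apply mul_le_mul_of_nonneg_right hsqinv (by positivity)
      _ = |y' - y_c| ^ (m + 1) / (M * (m + 1)) := by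
          field_simp
  have hgint : IntervalIntegrable (fun y' => |y' - y_c| ^ (m + 1) / (M * (m + 1)))
      volume y_c y := by
    apply Continuous.intervalIntegrable
    continuity
  have h1 : |rayT u c y_c f y| ≤
      |∫ y' in y_c..y, |y' - y_c| ^ (m + 1) / (M * (m + 1))| := by
    rw [show |rayT u c y_c f y| = ‖rayT u c y_c f y‖ from rfl]
    exact intervalIntegral.norm_integral_le_abs_of_norm_le
      ((ae_restrict_iff' measurableSet_uIoc).2 (Filter.Eventually.of_forall key)) hgint
  have h2 : |∫ y' in y_c..y, |y' - y_c| ^ (m + 1) / (M * (m + 1))| =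
      |y - y_c| ^ (m + 2) / (M * (m + 1) * (m + 2)) := by
    have : (fun y' => |y' - y_c| ^ (m + 1) / (M * (m + 1))) =
        fun y' => (M * (m + 1))⁻¹ * |y' - y_c| ^ (m + 1) := by
      funext y'; field_simp
    rw [this, intervalIntegral.integral_const_mul, abs_mul,
      abs_of_nonneg (show (0:ℝ) ≤ (M * (m + 1))⁻¹ by positivity),
      abs_integral_pow_abs_sub]
    push_cast
    rw [inv_mul_eq_div, div_div]
    ring_nf
  exact h1.trans_eq h2

lemma rayT_iter_bound (u : ℝ → ℝ) (y_c : ℝ) (hyc : y_c ∈ Set.Icc (0:ℝ) 1)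
    (hmono : MonotoneOn u (Set.Icc (0:ℝ) 1)) (c : ℝ) (hc : c = u y_c) :
    ∀ k : ℕ, ∀ y ∈ Set.Icc (0:ℝ) 1,
      |(rayT u c y_c)^[k] (fun _ => 1) y| ≤
        |y - y_c| ^ (2 * k) / (Nat.factorial (2 * k)) := by
  intro k
  induction k with
  | zero => intro y hy; simp
  | succ k ih =>
    intro y hy
    rw [Function.iterate_succ_apply']
    have hM : (0:ℝ) < (Nat.factorial (2 * k) : ℝ) := by
      exact_mod_cast Nat.factorial_pos _
    have hb := rayT_bound u y_c hyc hmono c hc ((rayT u c y_c)^[k] (fun _ => 1))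
      (2 * k) (Nat.factorial (2 * k)) hM
      (fun z hz => by simpa using ih z hz) y hy
    have heq : ((Nat.factorial (2 * k) : ℝ) * (2 * k + 1) * (2 * k + 2)) =
        (Nat.factorial (2 * (k + 1)) : ℝ) := by
      have : 2 * (k + 1) = (2 * k + 1) + 1 := by ring
      rw [this, Nat.factorial_succ, Nat.factorial_succ]
      push_cast
      ring
    have heq2 : 2 * k + 2 = 2 * (k + 1) := by ring
    calc |(rayT u c y_c) ((rayT u c y_c)^[k] (fun _ => 1)) y|
        ≤ |y - y_c| ^ (2 * k + 2) /
            ((Nat.factorial (2 * k) : ℝ) * (2 * k + 1) * (2 * k + 2)) := by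
          convert hb using 3 <;> push_cast <;> ring
      _ = |y - y_c| ^ (2 * (k + 1)) / (Nat.factorial (2 * (k + 1)) : ℝ) := by
          rw [heq, heq2]

theorem stmt_4 (u u' : ℝ → ℝ) (c₀ : ℝ) (hc₀ : 0 < c₀)
    (hu : ∀ y ∈ Set.Icc (0:ℝ) 1, HasDerivAt u (u' y) y)
    (hu'c : ContinuousOn u' (Set.Icc 0 1))
    (hlow : ∀ y ∈ Set.Icc (0:ℝ) 1, c₀ ≤ u' y)
    (y_c : ℝ) (hyc : y_c ∈ Set.Icc (0:ℝ) 1) (c : ℝ) (hc : c = u y_c) :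
    ∀ y ∈ Set.Icc (0:ℝ) 1,
      |rayT u c y_c (fun _ => 1) y| ≤ (y - y_c) ^ 2 / 2 ∧
      ∀ k : ℕ, 1 ≤ k →
        |(rayT u c y_c)^[k] (fun _ => 1) y| ≤ (y - y_c) ^ (2 * k) / (Nat.factorial (2 * k)) := by
  have hcont : ContinuousOn u (Set.Icc 0 1) := fun x hx =>
    (hu x hx).continuousAt.continuousWithinAt
  have hmono : MonotoneOn u (Set.Icc (0:ℝ) 1) := by
    apply monotoneOn_of_deriv_nonneg (convex_Icc 0 1) hcont
    · intro x hx
      exact (hu x (interior_subset hx)).differentiableAt.differentiableWithinAt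
    · intro x hx
      rw [(hu x (interior_subset hx)).deriv]
      exact le_of_lt (lt_of_lt_of_le hc₀ (hlow x (interior_subset hx)))
  have main := rayT_iter_bound u y_c hyc hmono c hc
  have habs : ∀ (y : ℝ) (k : ℕ), |y - y_c| ^ (2 * k) = (y - y_c) ^ (2 * k) := by
    intro y k
    rw [pow_mul, pow_mul, sq_abs]
  intro y hy
  constructor
  · have := main 1 y hy
    rw [Function.iterate_one] at this
    calc |rayT u c y_c (fun _ => 1) y| ≤ |y - y_c| ^ (2 * 1) / (Nat.factorial (2 * 1)) := this
      _ = (y - y_c) ^ 2 / 2 := by rw [habs]; norm_num [Nat.factorial]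
  · intro k _
    have := main k y hy
    rwa [habs] at this
end

section
/- Let u ∈ C²([0,1]) with u' ≥ c₀ > 0 and let c ∈ [u(0), u(1)], y_c = u^{-1}(c). Suppose φ ∈ C²([0,1]) solves (u−c)(φ'' − α²φ) − u''φ = 0 with φ(0) = φ(1) = 0 and φ not identically zero. Then u''(y_c) = 0. -/
open Set Filter Topology

private lemma aux_derivs {E : Type*} [NormedAddCommGroup E] [NormedSpace ℝ E]
    {f : ℝ → E} (hf : ContDiffOn ℝ 2 f (Set.Icc 0 1)) {x : ℝ} (hx : x ∈ Set.Ioo (0:ℝ) 1) :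
    HasDerivAt f (derivWithin f (Set.Icc 0 1) x) x ∧
      HasDerivAt (derivWithin f (Set.Icc 0 1)) (iteratedDerivWithin 2 f (Set.Icc 0 1) x) x := by
  have hud : UniqueDiffOn ℝ (Set.Icc (0:ℝ) 1) := uniqueDiffOn_Icc one_pos
  have hxI : x ∈ Set.Icc (0:ℝ) 1 := Set.Ioo_subset_Icc_self hx
  have hnb : Set.Icc (0:ℝ) 1 ∈ 𝓝 x := Icc_mem_nhds hx.1 hx.2
  have h1 : DifferentiableOn ℝ f (Set.Icc 0 1) := hf.differentiableOn two_ne_zero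
  have h2 : ContDiffOn ℝ 1 (derivWithin f (Set.Icc 0 1)) (Set.Icc 0 1) :=
    hf.derivWithin hud (by norm_num)
  refine ⟨((h1 x hxI).hasDerivWithinAt).hasDerivAt hnb, ?_⟩
  have h3 : DifferentiableOn ℝ (derivWithin f (Set.Icc 0 1)) (Set.Icc 0 1) :=
    h2.differentiableOn one_ne_zero
  have h4 := ((h3 x hxI).hasDerivWithinAt).hasDerivAt hnb
  have heq2 : iteratedDerivWithin 2 f (Set.Icc 0 1) x
      = derivWithin (derivWithin f (Set.Icc 0 1)) (Set.Icc 0 1) x := by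
    rw [show (2:ℕ) = 1 + 1 from rfl, iteratedDerivWithin_succ]
    exact derivWithin_congr (fun y hy => congrFun iteratedDerivWithin_one y)
      (congrFun iteratedDerivWithin_one x)
  rw [heq2]
  exact h4

private lemma aux_F_deriv {φ ψ : ℝ → ℂ} {u : ℝ → ℝ} {c α : ℝ} {t : ℝ} {b : ℂ} {w' : ℝ}
    (hφd : HasDerivAt φ b t)
    (hψd : HasDerivAt ψ ((α:ℂ) ^ 2 * ((u t : ℂ) - (c:ℂ)) * φ t) t)
    (hud : HasDerivAt u w' t)
    (hw : u t - c ≠ 0)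
    (hψt : ψ t = ((u t : ℂ) - (c:ℂ)) * b - (w' : ℂ) * φ t) :
    HasDerivAt (fun y => (star (φ y) * ψ y).re / (u y - c))
      (Complex.normSq (ψ t) / (u t - c) ^ 2 + α ^ 2 * Complex.normSq (φ t)) t := by
  have hP : HasDerivAt (fun y => (star (φ y) * ψ y).re)
      ((star b * ψ t + star (φ t) * ((α:ℂ) ^ 2 * ((u t : ℂ) - (c:ℂ)) * φ t)).re) t :=
    Complex.reCLM.hasFDerivAt.comp_hasDerivAt t ((hφd.star).mul hψd)
  have hwd : HasDerivAt (fun y => u y - c) w' t := hud.sub_const _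
  have hdiv : HasDerivAt (fun y => (star (φ y) * ψ y).re / (u y - c)) _ t := hP.div hwd hw
  convert hdiv using 1
  have hWc : ((u t : ℂ) - (c:ℂ)) = ((u t - c : ℝ) : ℂ) := by push_cast; ring
  rw [hψt, hWc]
  generalize hW : u t - c = W at hw ⊢
  generalize φ t = p
  simp only [Complex.normSq_apply, Complex.mul_re, Complex.mul_im, Complex.add_re,
    Complex.sub_re, Complex.sub_im, Complex.add_im, Complex.ofReal_re, Complex.ofReal_im,
    RCLike.star_def, Complex.conj_re, Complex.conj_im, ← Complex.ofReal_pow]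
  field_simp
  ring

theorem stmt_6 (u : ℝ → ℝ) (c₀ : ℝ) (hc₀ : 0 < c₀)
    (hu : ContDiffOn ℝ 2 u (Set.Icc 0 1))
    (hlow : ∀ y ∈ Set.Icc (0:ℝ) 1, c₀ ≤ derivWithin u (Set.Icc 0 1) y)
    (c y_c : ℝ) (hyc : y_c ∈ Set.Icc (0:ℝ) 1) (hcyc : u y_c = c)
    (hc : c ∈ Set.Icc (u 0) (u 1))
    (α : ℝ) (hα : α ≠ 0)
    (φ : ℝ → ℂ) (hφ : ContDiffOn ℝ 2 φ (Set.Icc 0 1))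
    (heq : ∀ y ∈ Set.Icc (0:ℝ) 1,
      ((u y : ℂ) - (c : ℂ)) * (iteratedDerivWithin 2 φ (Set.Icc 0 1) y - (α : ℂ) ^ 2 * φ y)
        - ((iteratedDerivWithin 2 u (Set.Icc 0 1) y : ℝ) : ℂ) * φ y = 0)
    (hb0 : φ 0 = 0) (hb1 : φ 1 = 0)
    (hne : ∃ y ∈ Set.Icc (0:ℝ) 1, φ y ≠ 0) :
    iteratedDerivWithin 2 u (Set.Icc 0 1) y_c = 0 := by
  have hud : UniqueDiffOn ℝ (Set.Icc (0:ℝ) 1) := uniqueDiffOn_Icc one_pos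
  by_cases hphic : φ y_c = 0
  swap
  · -- easy case: φ (y_c) ≠ 0
    have h := heq y_c hyc
    rw [hcyc, sub_self, zero_mul, zero_sub, neg_eq_zero, mul_eq_zero] at h
    rcases h with h | h
    · exact_mod_cast h
    · exact absurd h hphic
  -- hard case
  exfalso
  obtain ⟨y₀, hy₀I, hy₀⟩ := hne
  apply hy₀
  set u1 := derivWithin u (Set.Icc 0 1) with hu1def
  set p1 := derivWithin φ (Set.Icc 0 1) with hp1def
  set ψ : ℝ → ℂ := fun y => ((u y : ℂ) - (c : ℂ)) * p1 y - (u1 y : ℂ) * φ y with hψdef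
  set F : ℝ → ℝ := fun y => (star (φ y) * ψ y).re / (u y - c) with hFdef
  set N : ℝ → ℝ :=
    fun y => Complex.normSq (ψ y) / (u y - c) ^ 2 + α ^ 2 * Complex.normSq (φ y) with hNdef
  -- continuity facts
  have hcu : ContinuousOn u (Set.Icc 0 1) := hu.continuousOn
  have hcu1 : ContinuousOn u1 (Set.Icc 0 1) := hu.continuousOn_derivWithin hud one_le_two
  have hcp : ContinuousOn φ (Set.Icc 0 1) := hφ.continuousOn
  have hcp1 : ContinuousOn p1 (Set.Icc 0 1) := hφ.continuousOn_derivWithin hud one_le_two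
  have hcψ : ContinuousOn ψ (Set.Icc 0 1) := by
    apply ContinuousOn.sub
    · exact ((Complex.continuous_ofReal.comp_continuousOn hcu).sub continuousOn_const).mul hcp1
    · exact (Complex.continuous_ofReal.comp_continuousOn hcu1).mul hcp
  -- derivative facts at interior points
  have hDu : ∀ x ∈ Set.Ioo (0:ℝ) 1, HasDerivAt u (u1 x) x := fun x hx => (aux_derivs hu hx).1
  have hDu1 : ∀ x ∈ Set.Ioo (0:ℝ) 1,
      HasDerivAt u1 (iteratedDerivWithin 2 u (Set.Icc 0 1) x) x := fun x hx => (aux_derivs hu hx).2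
  have hDp : ∀ x ∈ Set.Ioo (0:ℝ) 1, HasDerivAt φ (p1 x) x := fun x hx => (aux_derivs hφ hx).1
  have hDp1 : ∀ x ∈ Set.Ioo (0:ℝ) 1,
      HasDerivAt p1 (iteratedDerivWithin 2 φ (Set.Icc 0 1) x) x := fun x hx => (aux_derivs hφ hx).2
  have hy0 : (0:ℝ) ≤ y_c := hyc.1
  have hy1 : y_c ≤ 1 := hyc.2
  -- growth of u
  have hgrow : ∀ a ∈ Set.Icc (0:ℝ) 1, ∀ b ∈ Set.Icc (0:ℝ) 1, a ≤ b →
      c₀ * (b - a) ≤ u b - u a := by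
    intro a ha b hb hab
    have hg : MonotoneOn (fun y => u y - c₀ * y) (Set.Icc 0 1) := by
      apply monotoneOn_of_deriv_nonneg (convex_Icc 0 1)
      · exact hcu.sub (continuous_const.mul continuous_id).continuousOn
      · intro x hx
        rw [interior_Icc] at hx
        have hD' : HasDerivAt (fun y => u y - c₀ * y) (u1 x - c₀) x := by
          exact ((hDu x hx).sub ((hasDerivAt_id' x).const_mul c₀)).congr_deriv (by ring)
        exact hD'.differentiableAt.differentiableWithinAt
      · intro x hx
        rw [interior_Icc] at hx
        have hD' : HasDerivAt (fun y => u y - c₀ * y) (u1 x - c₀) x := by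
          exact ((hDu x hx).sub ((hasDerivAt_id' x).const_mul c₀)).congr_deriv (by ring)
        rw [hD'.deriv]
        have := hlow x (Set.Ioo_subset_Icc_self hx)
        linarith
    have := hg ha hb hab
    simp only at this
    linarith
  -- positivity / negativity of u - c away from y_c
  have hwR : ∀ z ∈ Set.Icc (0:ℝ) 1, y_c < z → 0 < u z - c := by
    intro z hz hzy
    have h1 := hgrow y_c hyc z hz hzy.le
    rw [hcyc] at h1
    have h2 : 0 < c₀ * (z - y_c) := mul_pos hc₀ (sub_pos.2 hzy)
    linarith
  have hwL : ∀ z ∈ Set.Icc (0:ℝ) 1, z < y_c → u z - c < 0 := by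
    intro z hz hzy
    have h1 := hgrow z hz y_c hyc hzy.le
    rw [hcyc] at h1
    have h2 : 0 < c₀ * (y_c - z) := mul_pos hc₀ (sub_pos.2 hzy)
    linarith
  -- ψ vanishes at y_c
  have hψyc : ψ y_c = 0 := by
    simp [hψdef, hcyc, hphic]
  -- derivative of ψ
  have hDψ : ∀ x ∈ Set.Ioo (0:ℝ) 1,
      HasDerivAt ψ ((α:ℂ) ^ 2 * ((u x : ℂ) - (c : ℂ)) * φ x) x := by
    intro x hx
    have hxI : x ∈ Set.Icc (0:ℝ) 1 := Set.Ioo_subset_Icc_self hx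
    have h1 : HasDerivAt (fun y => ((u y : ℂ) - (c : ℂ))) ((u1 x : ℂ)) x :=
      ((hDu x hx).ofReal_comp).sub_const _
    have h2 : HasDerivAt (fun y => ((u1 y : ℂ)))
        ((iteratedDerivWithin 2 u (Set.Icc 0 1) x : ℝ) : ℂ) x := (hDu1 x hx).ofReal_comp
    have h : HasDerivAt ψ _ x := (h1.mul (hDp1 x hx)).sub (h2.mul (hDp x hx))
    convert h using 1
    have he := heq x hxI
    linear_combination -he
  -- derivative of F
  have hDF : ∀ x ∈ Set.Ioo (0:ℝ) 1, u x - c ≠ 0 → HasDerivAt F (N x) x := by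
    intro x hx hwne
    have hψx : ψ x = ((u x : ℂ) - (c:ℂ)) * p1 x - ((u1 x : ℝ) : ℂ) * φ x := rfl
    exact aux_F_deriv (hDp x hx) (hDψ x hx) (hDu x hx) hwne hψx
  -- N nonneg
  have hNnonneg : ∀ x, 0 ≤ N x := by
    intro x
    have h1 : 0 ≤ Complex.normSq (ψ x) / (u x - c) ^ 2 :=
      div_nonneg (Complex.normSq_nonneg _) (sq_nonneg _)
    have h2 : 0 ≤ α ^ 2 * Complex.normSq (φ x) :=
      mul_nonneg (sq_nonneg _) (Complex.normSq_nonneg _)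
    exact add_nonneg h1 h2
  -- Lipschitz bound for φ centered at y_c
  obtain ⟨M, hM⟩ := IsCompact.exists_bound_of_continuousOn isCompact_Icc hcp1
  have hM0 : ∀ y ∈ Set.Icc (0:ℝ) 1, ‖φ y‖ ≤ M * |y - y_c| := by
    intro y hy
    have h := Convex.norm_image_sub_le_of_norm_hasDerivWithin_le
      (f := φ) (f' := p1) (s := Set.Icc 0 1)
      (fun z hz => ((hφ.differentiableOn two_ne_zero) z hz).hasDerivWithinAt)
      hM (convex_Icc 0 1) hyc hy
    rw [hphic, sub_zero] at h
    simpa [Real.norm_eq_abs] using h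
  -- limits of F at y_c from the right and left
  have hψ0 : Filter.Tendsto ψ (𝓝[Set.Icc 0 1] y_c) (𝓝 0) := by
    have := (hcψ y_c hyc).tendsto
    rwa [hψyc] at this
  have hlimR : y_c < 1 → Filter.Tendsto F (𝓝[Set.Ioo y_c 1] y_c) (𝓝 0) := by
    intro hlt
    have hsub : Set.Ioo y_c 1 ⊆ Set.Icc (0:ℝ) 1 :=
      fun z hz => ⟨le_trans hy0 hz.1.le, hz.2.le⟩
    have hg : Filter.Tendsto (fun a => (M / c₀) * ‖ψ a‖) (𝓝[Set.Ioo y_c 1] y_c) (𝓝 0) := by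
      have h2 : Filter.Tendsto ψ (𝓝[Set.Ioo y_c 1] y_c) (𝓝 0) :=
        hψ0.mono_left (nhdsWithin_mono _ hsub)
      have h3 := h2.norm
      rw [norm_zero] at h3
      have h4 := h3.const_mul (M / c₀)
      simpa using h4
    apply squeeze_zero_norm' ?_ hg
    filter_upwards [eventually_mem_nhdsWithin] with a ha
    have haI : a ∈ Set.Icc (0:ℝ) 1 := hsub ha
    have hay : 0 < a - y_c := sub_pos.2 ha.1
    have hwpos : c₀ * (a - y_c) ≤ u a - c := by
      have h1 := hgrow y_c hyc a haI ha.1.le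
      rw [hcyc] at h1
      linarith
    have hwp : 0 < u a - c := lt_of_lt_of_le (mul_pos hc₀ hay) hwpos
    have hnum : |(star (φ a) * ψ a).re| ≤ ‖φ a‖ * ‖ψ a‖ := by
      calc |(star (φ a) * ψ a).re| ≤ ‖star (φ a) * ψ a‖ := Complex.abs_re_le_norm _
        _ = ‖φ a‖ * ‖ψ a‖ := by rw [norm_mul, norm_star]
    have hb' : ‖φ a‖ ≤ M * (a - y_c) := by
      have := hM0 a haI
      rwa [abs_of_pos hay] at this
    have hFa : ‖F a‖ = |(star (φ a) * ψ a).re| / (u a - c) := by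
      rw [hFdef, Real.norm_eq_abs, abs_div, abs_of_pos hwp]
    rw [hFa]
    have hMq : 0 ≤ M * (a - y_c) := le_trans (norm_nonneg _) hb'
    calc |(star (φ a) * ψ a).re| / (u a - c)
        ≤ (M * (a - y_c) * ‖ψ a‖) / (c₀ * (a - y_c)) := by
          apply div_le_div₀ (mul_nonneg hMq (norm_nonneg _)) ?_ (mul_pos hc₀ hay) hwpos
          exact le_trans hnum (mul_le_mul_of_nonneg_right hb' (norm_nonneg _))
      _ = (M / c₀) * ‖ψ a‖ := by
          field_simp
  have hlimL : 0 < y_c → Filter.Tendsto F (𝓝[Set.Ioo 0 y_c] y_c) (𝓝 0) := by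
    intro hlt
    have hsub : Set.Ioo 0 y_c ⊆ Set.Icc (0:ℝ) 1 :=
      fun z hz => ⟨hz.1.le, le_trans hz.2.le hy1⟩
    have hg : Filter.Tendsto (fun a => (M / c₀) * ‖ψ a‖) (𝓝[Set.Ioo 0 y_c] y_c) (𝓝 0) := by
      have h2 : Filter.Tendsto ψ (𝓝[Set.Ioo 0 y_c] y_c) (𝓝 0) :=
        hψ0.mono_left (nhdsWithin_mono _ hsub)
      have h3 := h2.norm
      rw [norm_zero] at h3
      have h4 := h3.const_mul (M / c₀)
      simpa using h4
    apply squeeze_zero_norm' ?_ hg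
    filter_upwards [eventually_mem_nhdsWithin] with a ha
    have haI : a ∈ Set.Icc (0:ℝ) 1 := hsub ha
    have hay : 0 < y_c - a := sub_pos.2 ha.2
    have hwpos : c₀ * (y_c - a) ≤ c - u a := by
      have h1 := hgrow a haI y_c hyc ha.2.le
      rw [hcyc] at h1
      linarith
    have hwp : 0 < c - u a := lt_of_lt_of_le (mul_pos hc₀ hay) hwpos
    have hnum : |(star (φ a) * ψ a).re| ≤ ‖φ a‖ * ‖ψ a‖ := by
      calc |(star (φ a) * ψ a).re| ≤ ‖star (φ a) * ψ a‖ := Complex.abs_re_le_norm _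
        _ = ‖φ a‖ * ‖ψ a‖ := by rw [norm_mul, norm_star]
    have hb' : ‖φ a‖ ≤ M * (y_c - a) := by
      have h := hM0 a haI
      rw [abs_of_neg (by linarith : a - y_c < 0)] at h
      calc ‖φ a‖ ≤ M * -(a - y_c) := h
        _ = M * (y_c - a) := by ring_nf
    have hFa : ‖F a‖ = |(star (φ a) * ψ a).re| / (c - u a) := by
      rw [hFdef, Real.norm_eq_abs, abs_div]
      congr 1
      rw [abs_of_neg (by linarith : u a - c < 0)]
      ring
    rw [hFa]
    have hMq : 0 ≤ M * (y_c - a) := le_trans (norm_nonneg _) hb'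
    calc |(star (φ a) * ψ a).re| / (c - u a)
        ≤ (M * (y_c - a) * ‖ψ a‖) / (c₀ * (y_c - a)) := by
          apply div_le_div₀ (mul_nonneg hMq (norm_nonneg _)) ?_ (mul_pos hc₀ hay) hwpos
          exact le_trans hnum (mul_le_mul_of_nonneg_right hb' (norm_nonneg _))
      _ = (M / c₀) * ‖ψ a‖ := by
          field_simp
  -- monotonicity of F on each side
  have hFmonoR : ∀ a b : ℝ, y_c < a → a ≤ b → b ≤ 1 → F a ≤ F b := by
    intro a b hayc hab hble
    have hsub : Set.Icc a b ⊆ Set.Icc 0 1 := Set.Icc_subset_Icc (le_trans hy0 hayc.le) hble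
    have hwne : ∀ z ∈ Set.Icc a b, u z - c ≠ 0 := by
      intro z hz
      exact ne_of_gt (hwR z (hsub hz) (lt_of_lt_of_le hayc hz.1))
    have hcF : ContinuousOn F (Set.Icc a b) := by
      apply ContinuousOn.div
      · exact Complex.continuous_re.comp_continuousOn
          (((hcp.mono hsub).star).mul (hcψ.mono hsub))
      · exact ((hcu.mono hsub).sub continuousOn_const)
      · exact hwne
    have hmF : MonotoneOn F (Set.Icc a b) := by
      apply monotoneOn_of_deriv_nonneg (convex_Icc a b) hcF
      · intro x hx
        rw [interior_Icc] at hx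
        have hx01 : x ∈ Set.Ioo (0:ℝ) 1 :=
          ⟨lt_of_le_of_lt (le_trans hy0 hayc.le) hx.1, lt_of_lt_of_le hx.2 hble⟩
        have hwx := hwne x (Set.Ioo_subset_Icc_self hx)
        exact (hDF x hx01 hwx).differentiableAt.differentiableWithinAt
      · intro x hx
        rw [interior_Icc] at hx
        have hx01 : x ∈ Set.Ioo (0:ℝ) 1 :=
          ⟨lt_of_le_of_lt (le_trans hy0 hayc.le) hx.1, lt_of_lt_of_le hx.2 hble⟩
        have hwx := hwne x (Set.Ioo_subset_Icc_self hx)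
        rw [(hDF x hx01 hwx).deriv]
        exact hNnonneg x
    exact hmF ⟨le_rfl, hab⟩ ⟨hab, le_rfl⟩ hab
  have hFmonoL : ∀ a b : ℝ, 0 ≤ a → a ≤ b → b < y_c → F a ≤ F b := by
    intro a b ha0 hab hbyc
    have hsub : Set.Icc a b ⊆ Set.Icc 0 1 :=
      Set.Icc_subset_Icc ha0 (le_trans hbyc.le hy1)
    have hwne : ∀ z ∈ Set.Icc a b, u z - c ≠ 0 := by
      intro z hz
      exact ne_of_lt (hwL z (hsub hz) (lt_of_le_of_lt hz.2 hbyc))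
    have hcF : ContinuousOn F (Set.Icc a b) := by
      apply ContinuousOn.div
      · exact Complex.continuous_re.comp_continuousOn
          (((hcp.mono hsub).star).mul (hcψ.mono hsub))
      · exact ((hcu.mono hsub).sub continuousOn_const)
      · exact hwne
    have hmF : MonotoneOn F (Set.Icc a b) := by
      apply monotoneOn_of_deriv_nonneg (convex_Icc a b) hcF
      · intro x hx
        rw [interior_Icc] at hx
        have hx01 : x ∈ Set.Ioo (0:ℝ) 1 :=
          ⟨lt_of_le_of_lt ha0 hx.1, lt_of_lt_of_le (lt_of_lt_of_le hx.2 hbyc.le) hy1⟩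
        have hwx := hwne x (Set.Ioo_subset_Icc_self hx)
        exact (hDF x hx01 hwx).differentiableAt.differentiableWithinAt
      · intro x hx
        rw [interior_Icc] at hx
        have hx01 : x ∈ Set.Ioo (0:ℝ) 1 :=
          ⟨lt_of_le_of_lt ha0 hx.1, lt_of_lt_of_le (lt_of_lt_of_le hx.2 hbyc.le) hy1⟩
        have hwx := hwne x (Set.Ioo_subset_Icc_self hx)
        rw [(hDF x hx01 hwx).deriv]
        exact hNnonneg x
    exact hmF ⟨le_rfl, hab⟩ ⟨hab, le_rfl⟩ hab
  -- boundary values of F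
  have hF1 : F 1 = 0 := by
    rw [hFdef]
    simp [hb1]
  have hF0 : F 0 = 0 := by
    rw [hFdef]
    simp [hb0]
  -- F vanishes on each side
  have hFR0 : ∀ b : ℝ, y_c < b → b ≤ 1 → F b = 0 := by
    intro b hbyc hble
    have hlt1 : y_c < 1 := lt_of_lt_of_le hbyc hble
    have hnb : (𝓝[Set.Ioo y_c 1] y_c).NeBot := left_nhdsWithin_Ioo_neBot hlt1
    have h1 : 0 ≤ F b := by
      apply le_of_tendsto (hlimR hlt1)
      have hev : ∀ᶠ a in 𝓝[Set.Ioo y_c 1] y_c, a < b :=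
        ((isOpen_Iio.eventually_mem (show y_c ∈ Set.Iio b from hbyc)).filter_mono
          nhdsWithin_le_nhds)
      filter_upwards [eventually_mem_nhdsWithin, hev] with a ha hab
      exact hFmonoR a b ha.1 hab.le hble
    have h2 : F b ≤ 0 := by
      have := hFmonoR b 1 hbyc hble le_rfl
      rwa [hF1] at this
    linarith
  have hFL0 : ∀ b : ℝ, 0 ≤ b → b < y_c → F b = 0 := by
    intro b hb0' hbyc
    have hlt0 : 0 < y_c := lt_of_le_of_lt hb0' hbyc
    have hnb : (𝓝[Set.Ioo 0 y_c] y_c).NeBot := right_nhdsWithin_Ioo_neBot hlt0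
    have h2 : F b ≤ 0 := by
      apply ge_of_tendsto (hlimL hlt0)
      have hev : ∀ᶠ a in 𝓝[Set.Ioo 0 y_c] y_c, b < a :=
        ((isOpen_Ioi.eventually_mem (show y_c ∈ Set.Ioi b from hbyc)).filter_mono
          nhdsWithin_le_nhds)
      filter_upwards [eventually_mem_nhdsWithin, hev] with a ha hab
      exact hFmonoL b a hb0' hab.le ha.2
    have h1 : 0 ≤ F b := by
      have := hFmonoL 0 b le_rfl hb0' hbyc
      rwa [hF0] at this
    linarith
  -- φ vanishes away from y_c
  have hvanR : ∀ y : ℝ, y_c < y → y < 1 → φ y = 0 := by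
    intro y hyyc hylt
    have hy01 : y ∈ Set.Ioo (0:ℝ) 1 := ⟨lt_of_le_of_lt hy0 hyyc, hylt⟩
    have hwy : u y - c ≠ 0 :=
      ne_of_gt (hwR y (Set.Ioo_subset_Icc_self hy01) hyyc)
    have hD := hDF y hy01 hwy
    have hev : F =ᶠ[𝓝 y] fun _ => 0 := by
      filter_upwards [isOpen_Ioo.eventually_mem (show y ∈ Set.Ioo y_c 1 from ⟨hyyc, hylt⟩)]
        with z hz
      exact hFR0 z hz.1 hz.2.le
    have hD0 : HasDerivAt F 0 y :=
      (hasDerivAt_const y (0:ℝ)).congr_of_eventuallyEq hev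
    have hN0 : N y = 0 := hD.unique hD0
    have hN0' : Complex.normSq (ψ y) / (u y - c) ^ 2 + α ^ 2 * Complex.normSq (φ y) = 0 := hN0
    have h1 : 0 ≤ Complex.normSq (ψ y) / (u y - c) ^ 2 :=
      div_nonneg (Complex.normSq_nonneg _) (sq_nonneg _)
    have h2 : 0 ≤ Complex.normSq (φ y) := Complex.normSq_nonneg _
    have hα2 : 0 < α ^ 2 := by positivity
    have h3 : Complex.normSq (φ y) = 0 := by nlinarith
    exact Complex.normSq_eq_zero.mp h3
  have hvanL : ∀ y : ℝ, 0 < y → y < y_c → φ y = 0 := by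
    intro y hy0' hyyc
    have hy01 : y ∈ Set.Ioo (0:ℝ) 1 := ⟨hy0', lt_of_lt_of_le hyyc hy1⟩
    have hwy : u y - c ≠ 0 :=
      ne_of_lt (hwL y (Set.Ioo_subset_Icc_self hy01) hyyc)
    have hD := hDF y hy01 hwy
    have hev : F =ᶠ[𝓝 y] fun _ => 0 := by
      filter_upwards [isOpen_Ioo.eventually_mem (show y ∈ Set.Ioo 0 y_c from ⟨hy0', hyyc⟩)]
        with z hz
      exact hFL0 z hz.1.le hz.2
    have hD0 : HasDerivAt F 0 y :=
      (hasDerivAt_const y (0:ℝ)).congr_of_eventuallyEq hev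
    have hN0 : N y = 0 := hD.unique hD0
    have hN0' : Complex.normSq (ψ y) / (u y - c) ^ 2 + α ^ 2 * Complex.normSq (φ y) = 0 := hN0
    have h1 : 0 ≤ Complex.normSq (ψ y) / (u y - c) ^ 2 :=
      div_nonneg (Complex.normSq_nonneg _) (sq_nonneg _)
    have h2 : 0 ≤ Complex.normSq (φ y) := Complex.normSq_nonneg _
    have hα2 : 0 < α ^ 2 := by positivity
    have h3 : Complex.normSq (φ y) = 0 := by nlinarith
    exact Complex.normSq_eq_zero.mp h3
  -- conclude
  rcases lt_trichotomy y₀ y_c with h | h | h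
  · rcases eq_or_lt_of_le hy₀I.1 with h0 | h0
    · rw [← h0]; exact hb0
    · exact hvanL y₀ h0 h
  · rw [h]; exact hphic
  · rcases eq_or_lt_of_le hy₀I.2 with h1 | h1
    · rw [h1]; exact hb1
    · exact hvanR y₀ h h1
end

section
/- Let u ∈ C²([0,1]) with u' ≥ c₀ > 0, c ∈ (u(0), u(1)), y_c = u^{-1}(c), and φ₁ the solution of φ₁ = 1 + α²Tφ₁ with T as above. Then φ₁ satisfies the one-sided monotonicity φ₁(y) ≥ φ₁(z) ≥ 1 whenever |y − y_c| ≥ |z − y_c| and y, z lie on the same side of y_c, and |φ₁(y) − 1| ≤ C α² (y − y_c)² φ₁(y). -/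
open MeasureTheory

/-- Inner integral. -/
noncomputable def rayI (u : ℝ → ℝ) (c y_c : ℝ) (φ : ℝ → ℝ) (y' : ℝ) : ℝ :=
  ∫ z in y_c..y', φ z * (u z - c) ^ 2

/-- Integrand of the outer integral. -/
noncomputable def rayg (u : ℝ → ℝ) (c y_c : ℝ) (φ : ℝ → ℝ) (y' : ℝ) : ℝ :=
  ((u y' - c) ^ 2)⁻¹ * rayI u c y_c φ y'

lemma rayT_eq (u : ℝ → ℝ) (c y_c : ℝ) (φ : ℝ → ℝ) (y : ℝ) :
    rayT u c y_c φ y = ∫ y' in y_c..y, rayg u c y_c φ y' := rfl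

/-- One-sided (right side) analysis of the fixed point equation. -/
lemma ray_aux_right (u : ℝ → ℝ) (A B y_c c : ℝ) (hycA : A ≤ y_c) (hycB : y_c ≤ B)
    (hucont : ContinuousOn u (Set.Icc A B))
    (hmono : StrictMonoOn u (Set.Icc A B)) (hc : c = u y_c)
    (α : ℝ) (φ : ℝ → ℝ) (hφc : ContinuousOn φ (Set.Icc A B))
    (hfix : ∀ y ∈ Set.Icc A B, φ y = 1 + α ^ 2 * rayT u c y_c φ y) :
    (∀ y ∈ Set.Icc y_c B, 1 ≤ φ y) ∧
    (∀ y ∈ Set.Icc y_c B, ∀ z ∈ Set.Icc y_c y, φ z ≤ φ y) ∧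
    (∀ y ∈ Set.Icc y_c B, φ y - 1 ≤ 1/2 * α ^ 2 * (y - y_c) ^ 2 * φ y) := by
  have hsub : Set.Icc y_c B ⊆ Set.Icc A B := Set.Icc_subset_Icc hycA le_rfl
  have hyc_mem : y_c ∈ Set.Icc A B := ⟨hycA, hycB⟩
  have hfix' : ∀ y ∈ Set.Icc A B, φ y = 1 + α ^ 2 * ∫ y' in y_c..y, rayg u c y_c φ y' := by
    intro y hy; rw [← rayT_eq]; exact hfix y hy
  have hIyc : rayI u c y_c φ y_c = 0 := intervalIntegral.integral_same
  have husub : ∀ z ∈ Set.Icc y_c B, 0 ≤ u z - c := by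
    intro z hz
    rcases eq_or_lt_of_le hz.1 with h | h
    · rw [← h, hc, sub_self]
    · have := hmono hyc_mem (hsub hz) h
      rw [hc]; linarith
  have hupos : ∀ z, y_c < z → z ≤ B → 0 < u z - c := by
    intro z h1 h2
    have := hmono hyc_mem (hsub ⟨h1.le, h2⟩) h1
    rw [hc]; linarith
  have hasq : ∀ z w, y_c ≤ z → z ≤ w → w ≤ B → (u z - c) ^ 2 ≤ (u w - c) ^ 2 := by
    intro z w h1 h2 h3
    have h0 : 0 ≤ u z - c := husub z ⟨h1, h2.trans h3⟩
    have h4 : u z - c ≤ u w - c := by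
      rcases eq_or_lt_of_le h2 with h | h
      · rw [h]
      · have := hmono (hsub ⟨h1, h2.trans h3⟩) (hsub ⟨h1.trans h2, h3⟩) h
        linarith
    exact pow_le_pow_left₀ h0 h4 2
  have hint_cont : ContinuousOn (fun z => φ z * (u z - c) ^ 2) (Set.Icc A B) :=
    hφc.mul ((hucont.sub continuousOn_const).pow 2)
  have hφyc : φ y_c = 1 := by
    have := hfix' y_c hyc_mem
    simpa [intervalIntegral.integral_same] using this
  -- positivity of φ on the right of y_c
  have hpos : ∀ y ∈ Set.Icc y_c B, 0 < φ y := by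
    by_contra hcon
    push_neg at hcon
    obtain ⟨y₀, hy₀, hy₀le⟩ := hcon
    have hSclosed : IsClosed (Set.Icc y_c B ∩ φ ⁻¹' Set.Iic 0) :=
      (hφc.mono hsub).preimage_isClosed_of_isClosed isClosed_Icc isClosed_Iic
    have hScpt : IsCompact (Set.Icc y_c B ∩ φ ⁻¹' Set.Iic 0) :=
      isCompact_Icc.of_isClosed_subset hSclosed Set.inter_subset_left
    have hSne : (Set.Icc y_c B ∩ φ ⁻¹' Set.Iic 0).Nonempty := ⟨y₀, hy₀, hy₀le⟩
    set m := sInf (Set.Icc y_c B ∩ φ ⁻¹' Set.Iic 0) with hm_def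
    have hmS : m ∈ Set.Icc y_c B ∩ φ ⁻¹' Set.Iic 0 := hScpt.sInf_mem hSne
    have hmyc : y_c ≤ m := hmS.1.1
    have hmB : m ≤ B := hmS.1.2
    have hlt : y_c < m := by
      rcases eq_or_lt_of_le hmyc with h | h
      · exfalso
        have : φ m ≤ 0 := hmS.2
        rw [← h, hφyc] at this; linarith
      · exact h
    have hpos_lt : ∀ t ∈ Set.Ico y_c m, 0 < φ t := by
      intro t ht
      by_contra h
      push_neg at h
      have htS : t ∈ Set.Icc y_c B ∩ φ ⁻¹' Set.Iic 0 := ⟨⟨ht.1, ht.2.le.trans hmB⟩, h⟩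
      have := csInf_le hScpt.bddBelow htS
      have := ht.2
      rw [← hm_def] at *
      linarith
    have hφm : 0 ≤ φ m := by
      have hTend : Filter.Tendsto φ (nhdsWithin m (Set.Ico y_c m)) (nhds (φ m)) := by
        have h1 := hφc.continuousWithinAt (hsub ⟨hmyc, hmB⟩)
        exact h1.mono_left (nhdsWithin_mono m fun t ht => hsub ⟨ht.1, ht.2.le.trans hmB⟩)
      haveI : (nhdsWithin m (Set.Ico y_c m)).NeBot := by
        rw [nhdsWithin_Ico_eq_nhdsLT hlt]; infer_instance
      exact ge_of_tendsto hTend (Filter.eventually_of_mem self_mem_nhdsWithin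
        fun t ht => (hpos_lt t ht).le)
    have hφge : ∀ t ∈ Set.Icc y_c m, 0 ≤ φ t := by
      intro t ht
      rcases eq_or_lt_of_le ht.2 with h | h
      · rw [h]; exact hφm
      · exact (hpos_lt t ⟨ht.1, h⟩).le
    have hgnn : ∀ y' ∈ Set.Icc y_c m, 0 ≤ rayg u c y_c φ y' := by
      intro y' hy'
      apply mul_nonneg (inv_nonneg.mpr (sq_nonneg _))
      apply intervalIntegral.integral_nonneg hy'.1
      intro z hz
      exact mul_nonneg (hφge z ⟨hz.1, hz.2.trans hy'.2⟩) (sq_nonneg _)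
    have h1 : (1:ℝ) ≤ φ m := by
      rw [hfix' m (hsub ⟨hmyc, hmB⟩)]
      have h0 : 0 ≤ ∫ y' in y_c..m, rayg u c y_c φ y' :=
        intervalIntegral.integral_nonneg hlt.le hgnn
      nlinarith [sq_nonneg α]
    have := hmS.2
    simp only [Set.mem_preimage, Set.mem_Iic] at this
    linarith
  have hgnn : ∀ y' ∈ Set.Icc y_c B, 0 ≤ rayg u c y_c φ y' := by
    intro y' hy'
    apply mul_nonneg (inv_nonneg.mpr (sq_nonneg _))
    apply intervalIntegral.integral_nonneg hy'.1
    intro z hz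
    exact mul_nonneg (hpos z ⟨hz.1, hz.2.trans hy'.2⟩).le (sq_nonneg _)
  have h1 : ∀ y ∈ Set.Icc y_c B, 1 ≤ φ y := by
    intro y hy
    rw [hfix' y (hsub hy)]
    have h0 : 0 ≤ ∫ y' in y_c..y, rayg u c y_c φ y' :=
      intervalIntegral.integral_nonneg hy.1 fun t ht => hgnn t ⟨ht.1, ht.2.trans hy.2⟩
    nlinarith [sq_nonneg α]
  -- a uniform bound on φ
  obtain ⟨M, hM⟩ := isCompact_Icc.exists_bound_of_continuousOn hφc
  have hM0 : 0 ≤ M := le_trans (norm_nonneg _) (hM y_c hyc_mem)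
  -- a bound on the inner integral
  have hIb : ∀ K, 0 ≤ K → ∀ y₁ ∈ Set.Icc y_c B, (∀ z ∈ Set.Icc y_c y₁, φ z ≤ K) →
      ∀ y' ∈ Set.Icc y_c y₁, rayI u c y_c φ y' ≤ (y' - y_c) * (K * (u y' - c) ^ 2) := by
    intro K hK y₁ hy₁ hφK y' hy'
    have hy'B : y' ∈ Set.Icc y_c B := ⟨hy'.1, hy'.2.trans hy₁.2⟩
    have hmonoI : (∫ z in y_c..y', φ z * (u z - c) ^ 2) ≤ ∫ _z in y_c..y', K * (u y' - c) ^ 2 := by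
      apply intervalIntegral.integral_mono_on hy'.1
      · apply ContinuousOn.intervalIntegrable
        apply hint_cont.mono
        rw [Set.uIcc_of_le hy'.1]
        exact fun t ht => hsub ⟨ht.1, ht.2.trans hy'B.2⟩
      · exact intervalIntegrable_const
      · intro z hz
        calc φ z * (u z - c) ^ 2 ≤ K * (u z - c) ^ 2 :=
              mul_le_mul_of_nonneg_right (hφK z ⟨hz.1, hz.2.trans hy'.2⟩) (sq_nonneg _)
          _ ≤ K * (u y' - c) ^ 2 :=
              mul_le_mul_of_nonneg_left (hasq z y' hz.1 hz.2 hy'B.2) hK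
    calc rayI u c y_c φ y' ≤ ∫ _z in y_c..y', K * (u y' - c) ^ 2 := hmonoI
      _ = (y' - y_c) * (K * (u y' - c) ^ 2) := by
          rw [intervalIntegral.integral_const, smul_eq_mul]
  -- pointwise bound on rayg
  have hgb : ∀ K, 0 ≤ K → ∀ y₁ ∈ Set.Icc y_c B, (∀ z ∈ Set.Icc y_c y₁, φ z ≤ K) →
      ∀ y' ∈ Set.Icc y_c y₁, rayg u c y_c φ y' ≤ K * (y' - y_c) := by
    intro K hK y₁ hy₁ hφK y' hy'
    rcases eq_or_lt_of_le hy'.1 with h | h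
    · have hI0 : rayI u c y_c φ y' = 0 := by rw [← h]; exact hIyc
      rw [rayg, hI0, mul_zero, ← h, sub_self, mul_zero]
    · have hA : 0 < (u y' - c) ^ 2 := pow_pos (hupos y' h (hy'.2.trans hy₁.2)) 2
      rw [rayg, inv_mul_le_iff₀ hA]
      calc rayI u c y_c φ y' ≤ (y' - y_c) * (K * (u y' - c) ^ 2) := hIb K hK y₁ hy₁ hφK y' hy'
        _ = (u y' - c) ^ 2 * (K * (y' - y_c)) := by ring
  have hφleM : ∀ z ∈ Set.Icc y_c B, φ z ≤ M := by
    intro z hz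
    have := hM z (hsub hz)
    rw [Real.norm_eq_abs] at this
    exact le_trans (le_abs_self _) this
  -- integrability of rayg
  have hIcont : ContinuousOn (rayI u c y_c φ) (Set.Icc y_c B) := by
    have he : Set.uIcc y_c B = Set.Icc y_c B := Set.uIcc_of_le hycB
    have hIOn : IntegrableOn (fun z => φ z * (u z - c) ^ 2) (Set.uIcc y_c B) := by
      rw [he]; exact (hint_cont.mono hsub).integrableOn_Icc
    have := intervalIntegral.continuousOn_primitive_interval (a := y_c) (b := B) hIOn
    rw [he] at this
    exact this
  have hgint : IntervalIntegrable (rayg u c y_c φ) volume y_c B := by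
    rw [intervalIntegrable_iff_integrableOn_Ioc_of_le hycB]
    have hmeas : AEStronglyMeasurable (rayg u c y_c φ) (volume.restrict (Set.Ioc y_c B)) := by
      apply ContinuousOn.aestronglyMeasurable _ measurableSet_Ioc
      apply ContinuousOn.mul
      · apply ContinuousOn.inv₀
        · exact (((hucont.mono fun t ht => hsub ⟨ht.1.le, ht.2⟩).sub continuousOn_const).pow 2)
        · intro x hx
          exact (pow_pos (hupos x hx.1 hx.2) 2).ne'
      · exact hIcont.mono Set.Ioc_subset_Icc_self
    apply Integrable.mono' (g := fun _ => M * (B - y_c))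
      (integrableOn_const measure_Ioc_lt_top.ne) hmeas
    refine (ae_restrict_iff' measurableSet_Ioc).mpr (Filter.Eventually.of_forall fun y' hy' => ?_)
    have hy'I : y' ∈ Set.Icc y_c B := Set.Ioc_subset_Icc_self hy'
    have h0 := hgnn y' hy'I
    rw [Real.norm_eq_abs, abs_of_nonneg h0]
    calc rayg u c y_c φ y' ≤ M * (y' - y_c) :=
          hgb M hM0 B ⟨hycB, le_rfl⟩ hφleM y' ⟨hy'I.1, hy'I.2⟩
      _ ≤ M * (B - y_c) := mul_le_mul_of_nonneg_left (by linarith [hy'I.2]) hM0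
  have hgint' : ∀ z y, y_c ≤ z → z ≤ y → y ≤ B →
      IntervalIntegrable (rayg u c y_c φ) volume z y := by
    intro z y h1' h2' h3'
    apply hgint.mono_set
    rw [Set.uIcc_of_le h2', Set.uIcc_of_le hycB]
    exact Set.Icc_subset_Icc h1' h3'
  -- monotonicity
  have hmonoφ : ∀ y ∈ Set.Icc y_c B, ∀ z ∈ Set.Icc y_c y, φ z ≤ φ y := by
    intro y hy z hz
    have hzB : z ∈ Set.Icc y_c B := ⟨hz.1, hz.2.trans hy.2⟩
    have hadd : (∫ y' in y_c..z, rayg u c y_c φ y') + (∫ y' in z..y, rayg u c y_c φ y')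
        = ∫ y' in y_c..y, rayg u c y_c φ y' :=
      intervalIntegral.integral_add_adjacent_intervals
        (hgint' y_c z le_rfl hz.1 hzB.2) (hgint' z y hz.1 hz.2 hy.2)
    have hseg : 0 ≤ ∫ y' in z..y, rayg u c y_c φ y' :=
      intervalIntegral.integral_nonneg hz.2 fun t ht => hgnn t ⟨hz.1.trans ht.1, ht.2.trans hy.2⟩
    rw [hfix' y (hsub hy), hfix' z (hsub hzB), ← hadd]
    nlinarith [mul_nonneg (sq_nonneg α) hseg]
  refine ⟨h1, hmonoφ, ?_⟩
  -- the quantitative bound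
  intro y hy
  have hφy0 : 0 ≤ φ y := (hpos y hy).le
  have hgb2 : ∀ y' ∈ Set.Icc y_c y, rayg u c y_c φ y' ≤ φ y * (y' - y_c) :=
    hgb (φ y) hφy0 y hy (hmonoφ y hy)
  have hIle : (∫ y' in y_c..y, rayg u c y_c φ y') ≤ φ y * ((y - y_c) ^ 2 / 2) := by
    have hconst : (∫ y' in y_c..y, φ y * (y' - y_c)) = φ y * ((y - y_c) ^ 2 / 2) := by
      rw [intervalIntegral.integral_const_mul]
      congr 1
      rw [intervalIntegral.integral_comp_sub_right (fun x => x) y_c, integral_id]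
      ring
    rw [← hconst]
    apply intervalIntegral.integral_mono_on hy.1 (hgint' y_c y le_rfl hy.1 hy.2)
    · exact (continuous_const.mul (continuous_id.sub continuous_const)).intervalIntegrable _ _
    · exact hgb2
  have hmul := mul_le_mul_of_nonneg_left hIle (sq_nonneg α)
  have heq : α ^ 2 * (φ y * ((y - y_c) ^ 2 / 2)) = 1/2 * α ^ 2 * (y - y_c) ^ 2 * φ y := by ring
  rw [heq] at hmul
  have hfy := hfix' y (hsub hy)
  linarith [hmul, hfy.le, hfy.ge]

/-- Reflection identity for `rayT`. -/
lemma rayT_reflect (u φ : ℝ → ℝ) (c y_c x : ℝ) :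
    rayT (fun t => -u (-t)) (-c) (-y_c) (fun t => φ (-t)) x = rayT u c y_c φ (-x) := by
  unfold rayT
  have hinner : ∀ y' : ℝ, (∫ z in (-y_c)..y', φ (-z) * (-u (-z) - -c) ^ 2)
      = -∫ z in y_c..(-y'), φ z * (u z - c) ^ 2 := by
    intro y'
    have h1 : (∫ z in (-y_c)..y', φ (-z) * (-u (-z) - -c) ^ 2)
        = ∫ z in (-y_c)..y', (fun w => φ w * (u w - c) ^ 2) (-z) := by
      apply intervalIntegral.integral_congr
      intro z _
      simp only
      ring
    rw [h1, intervalIntegral.integral_comp_neg (fun w => φ w * (u w - c) ^ 2), neg_neg,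
      intervalIntegral.integral_symm]
  have houter : (∫ y' in (-y_c)..x, ((-u (-y') - -c) ^ 2)⁻¹ *
        ∫ z in (-y_c)..y', φ (-z) * (-u (-z) - -c) ^ 2)
      = ∫ y' in (-y_c)..x,
        (fun t => -(((u t - c) ^ 2)⁻¹ * ∫ z in y_c..t, φ z * (u z - c) ^ 2)) (-y') := by
    apply intervalIntegral.integral_congr
    intro y' _
    simp only
    rw [hinner y']
    have h2 : (-u (-y') - -c) ^ 2 = (u (-y') - c) ^ 2 := by ring
    rw [h2]
    ring
  rw [houter,
    intervalIntegral.integral_comp_neg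
      (fun t => -(((u t - c) ^ 2)⁻¹ * ∫ z in y_c..t, φ z * (u z - c) ^ 2)),
    neg_neg, intervalIntegral.integral_symm, intervalIntegral.integral_neg, neg_neg]

theorem stmt_15 (u u' : ℝ → ℝ) (c₀ : ℝ) (hc₀ : 0 < c₀)
    (hu2 : ContDiffOn ℝ 2 u (Set.Icc 0 1))
    (hu : ∀ y ∈ Set.Icc (0:ℝ) 1, HasDerivAt u (u' y) y)
    (hlow : ∀ y ∈ Set.Icc (0:ℝ) 1, c₀ ≤ u' y)
    (y_c : ℝ) (hyc : y_c ∈ Set.Icc (0:ℝ) 1) (c : ℝ) (hc : c = u y_c)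
    (hcin : c ∈ Set.Ioo (u 0) (u 1)) :
    ∃ C : ℝ, 0 < C ∧ ∀ α : ℝ, 1 ≤ α → ∀ φ₁ : ℝ → ℝ, ContinuousOn φ₁ (Set.Icc 0 1) →
      (∀ y ∈ Set.Icc (0:ℝ) 1, φ₁ y = 1 + α ^ 2 * rayT u c y_c φ₁ y) →
      (∀ y ∈ Set.Icc (0:ℝ) 1, ∀ z ∈ Set.Icc (0:ℝ) 1,
        |z - y_c| ≤ |y - y_c| → 0 ≤ (y - y_c) * (z - y_c) →
          1 ≤ φ₁ z ∧ φ₁ z ≤ φ₁ y) ∧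
      (∀ y ∈ Set.Icc (0:ℝ) 1, |φ₁ y - 1| ≤ C * α ^ 2 * (y - y_c) ^ 2 * φ₁ y) := by
  have hmono : StrictMonoOn u (Set.Icc (0:ℝ) 1) := by
    apply strictMonoOn_of_deriv_pos (convex_Icc 0 1) hu2.continuousOn
    intro x hx
    rw [interior_Icc] at hx
    have hx' : x ∈ Set.Icc (0:ℝ) 1 := Set.Ioo_subset_Icc_self hx
    rw [(hu x hx').deriv]
    linarith [hlow x hx']
  refine ⟨1/2, by norm_num, ?_⟩
  intro α hα φ hφc hfix
  obtain ⟨hR1, hRmono, hRbd⟩ :=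
    ray_aux_right u 0 1 y_c c hyc.1 hyc.2 hu2.continuousOn hmono hc α φ hφc hfix
  -- reflected data for the left side
  have hmaps : ∀ t ∈ Set.Icc (-1:ℝ) 0, -t ∈ Set.Icc (0:ℝ) 1 := by
    intro t ht
    exact ⟨by linarith [ht.2], by linarith [ht.1]⟩
  have hcont' : ContinuousOn (fun t => -u (-t)) (Set.Icc (-1:ℝ) 0) := by
    apply ContinuousOn.neg
    exact hu2.continuousOn.comp continuousOn_neg hmaps
  have hmono' : StrictMonoOn (fun t => -u (-t)) (Set.Icc (-1:ℝ) 0) := by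
    intro x hx y hy hxy
    simp only
    have := hmono (hmaps y hy) (hmaps x hx) (by linarith)
    linarith
  have hφc' : ContinuousOn (fun t => φ (-t)) (Set.Icc (-1:ℝ) 0) :=
    hφc.comp continuousOn_neg hmaps
  have hc' : -c = (fun t => -u (-t)) (-y_c) := by
    simp only [neg_neg]
    rw [hc]
  have hfix' : ∀ x ∈ Set.Icc (-1:ℝ) 0,
      (fun t => φ (-t)) x = 1 + α ^ 2 * rayT (fun t => -u (-t)) (-c) (-y_c) (fun t => φ (-t)) x := by
    intro x hx
    rw [rayT_reflect]
    exact hfix (-x) (hmaps x hx)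
  obtain ⟨hL1, hLmono, hLbd⟩ :=
    ray_aux_right (fun t => -u (-t)) (-1) 0 (-y_c) (-c) (by linarith [hyc.2]) (by linarith [hyc.1])
      hcont' hmono' hc' α (fun t => φ (-t)) hφc' hfix'
  constructor
  · intro y hy z hz hzy hprod
    rcases le_or_gt y_c y with hycy | hycy
    · have hzyc : y_c ≤ z := by
        rcases lt_or_ge z y_c with h | h
        · exfalso
          have h2 : y - y_c ≤ 0 := by nlinarith
          have h3 : y = y_c := le_antisymm (by linarith) hycy
          rw [h3, sub_self, abs_zero] at hzy
          have h4 : z - y_c = 0 := abs_eq_zero.mp (le_antisymm hzy (abs_nonneg _))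
          linarith
        · exact h
      have hzy' : z ≤ y := by
        rw [abs_of_nonneg (by linarith : (0:ℝ) ≤ z - y_c),
          abs_of_nonneg (by linarith : (0:ℝ) ≤ y - y_c)] at hzy
        linarith
      exact ⟨hR1 z ⟨hzyc, hz.2⟩, hRmono y ⟨hycy, hy.2⟩ z ⟨hzyc, hzy'⟩⟩
    · have hzyc : z ≤ y_c := by
        rcases le_or_gt z y_c with h | h
        · exact h
        · exfalso; nlinarith
      have hyz : y ≤ z := by
        rw [abs_of_nonpos (by linarith : z - y_c ≤ 0),
          abs_of_nonpos (by linarith : y - y_c ≤ 0)] at hzy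
        linarith
      have h1 : (-z) ∈ Set.Icc (-y_c) (0:ℝ) := ⟨by linarith, by linarith [hz.1]⟩
      have h2 : (-y) ∈ Set.Icc (-y_c) (0:ℝ) := ⟨by linarith, by linarith [hy.1]⟩
      constructor
      · have := hL1 (-z) h1
        simpa using this
      · have := hLmono (-y) h2 (-z) ⟨by linarith, by linarith⟩
        simpa using this
  · intro y hy
    rcases le_or_gt y_c y with h | h
    · have h1 := hR1 y ⟨h, hy.2⟩
      have h2 := hRbd y ⟨h, hy.2⟩
      rw [abs_of_nonneg (by linarith)]
      linarith
    · have hym : (-y) ∈ Set.Icc (-y_c) (0:ℝ) := ⟨by linarith, by linarith [hy.1]⟩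
      have h1 := hL1 (-y) hym
      have h2 := hLbd (-y) hym
      simp only [neg_neg] at h1 h2
      rw [abs_of_nonneg (by linarith)]
      have h3 : (-y - -y_c) ^ 2 = (y - y_c) ^ 2 := by ring
      rw [h3] at h2
      linarith
end
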